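/- Fix strictly positive reals K, P_h, P_l, κ, γ, b, and integers N_r, n_τ, L with 0 ≤ N_r < n_τ ≤ L. Define A = P_h·(n_τ − N_r), D = P_l·L, F = b·(L − n_τ)·P_l + κ·L, m = K·L·A/(γ·F), n = (L·b·P_l + κ·L)/F, c = K·A²/γ, d = b·(n_τ − N_r)·P_h·P_l + κ·A, e = P_l·F, and f(x) = K·x·(A + (m·x + n)·D)² / (c·x + d + e·(m·x + n)²). Then for every ρ > 0 there exists a unique x* > 0 such that f(x*) = ρ. -/

import Mathlib

set_option maxHeartbeats 1000000


/-- Proposition 1 (existence and uniqueness part): for every threshold `ρ > 0`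
there is a unique `x* > 0` with `f x* = ρ`. -/
theorem stmt2 (K Ph Pl κ γ b : ℝ)
    (hK : 0 < K) (hPh : 0 < Ph) (hPl : 0 < Pl) (hκ : 0 < κ) (hγ : 0 < γ) (hb : 0 < b)
    (Nr nτ L : ℤ) (hNr : 0 ≤ Nr) (hnτ : Nr < nτ) (hL : nτ ≤ L)
    (A D F m n c d e : ℝ)
    (hA : A = Ph * ((nτ : ℝ) - (Nr : ℝ)))
    (hD : D = Pl * (L : ℝ))
    (hF : F = b * ((L : ℝ) - (nτ : ℝ)) * Pl + κ * (L : ℝ))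
    (hm : m = K * (L : ℝ) * A / (γ * F))
    (hn : n = ((L : ℝ) * b * Pl + κ * (L : ℝ)) / F)
    (hc : c = K * A ^ 2 / γ)
    (hd : d = b * ((nτ : ℝ) - (Nr : ℝ)) * Ph * Pl + κ * A)
    (he : e = Pl * F)
    (f : ℝ → ℝ)
    (hf : ∀ x, f x = K * x * (A + (m * x + n) * D) ^ 2
            / (c * x + d + e * (m * x + n) ^ 2))
    (ρ : ℝ) (hρ : 0 < ρ) :
    ∃! x : ℝ, 0 < x ∧ f x = ρ := by
  -- cast facts
  have hNrR : (0:ℝ) ≤ (Nr:ℝ) := by exact_mod_cast hNr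
  have hntR : (Nr:ℝ) < (nτ:ℝ) := by exact_mod_cast hnτ
  have hLR : (nτ:ℝ) ≤ (L:ℝ) := by exact_mod_cast hL
  have hLpos : (0:ℝ) < (L:ℝ) := by linarith
  -- positivity of parameters
  have hApos : 0 < A := by rw [hA]; exact mul_pos hPh (by linarith)
  have hDpos : 0 < D := by rw [hD]; exact mul_pos hPl hLpos
  have hFpos : 0 < F := by
    rw [hF]
    have h1 : 0 ≤ b * ((L:ℝ) - (nτ:ℝ)) * Pl :=
      mul_nonneg (mul_nonneg hb.le (by linarith)) hPl.le
    nlinarith [mul_pos hκ hLpos]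
  have hmpos : 0 < m := by
    rw [hm]; exact div_pos (mul_pos (mul_pos hK hLpos) hApos) (mul_pos hγ hFpos)
  have hnpos : 0 < n := by
    rw [hn]
    apply div_pos _ hFpos
    nlinarith [mul_pos (mul_pos hLpos hb) hPl, mul_pos hκ hLpos]
  have hcpos : 0 < c := by
    rw [hc]; exact div_pos (mul_pos hK (pow_pos hApos 2)) hγ
  have hdpos : 0 < d := by
    rw [hd]
    nlinarith [mul_pos (mul_pos (mul_pos hb (by linarith : (0:ℝ) < (nτ:ℝ) - (Nr:ℝ))) hPh) hPl,
      mul_pos hκ hApos]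
  have hepos : 0 < e := by rw [he]; exact mul_pos hPl hFpos
  -- key algebraic relations
  have h1 : γ * c = K * A ^ 2 := by rw [hc]; field_simp
  have h2 : γ * e * m = K * A * D := by
    rw [he, hm, hD]; field_simp
  have h3 : c * n = d * m := by
    rw [hc, hn, hd, hm, hA]; field_simp
  -- the simplified form of f on positives
  have key : ∀ x : ℝ, 0 < x →
      f x = γ * (m * x) * (A + D * (m * x + n)) / (A * (m * x + n)) := by
    intro x hx
    have ht : 0 < m * x + n := by positivity
    have hQ : 0 < c * x + d + e * (m * x + n) ^ 2 := by positivity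
    rw [hf, div_eq_div_iff hQ.ne' (mul_pos hApos ht).ne']
    linear_combination (-(x * (A + D * (m * x + n)) * (m * x + n))) * h1 +
      (-(x * (A + D * (m * x + n)) * (m * x + n) ^ 2)) * h2 +
      (γ * x * (A + D * (m * x + n))) * h3
  -- strict monotonicity on positives
  have mono : ∀ x y : ℝ, 0 < x → x < y → f x < f y := by
    intro x y hx hxy
    have hy : 0 < y := hx.trans hxy
    have htx : 0 < m * x + n := by positivity
    have hty : 0 < m * y + n := by positivity
    rw [key x hx, key y hy, div_lt_div_iff₀ (mul_pos hApos htx) (mul_pos hApos hty)]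
    have hfac : γ * (m * y) * (A + D * (m * y + n)) * (A * (m * x + n)) -
        γ * (m * x) * (A + D * (m * x + n)) * (A * (m * y + n)) =
        γ * m * A * ((y - x) * (A * n + D * (m * x + n) * (m * y + n))) := by ring
    have hp : 0 < γ * m * A * ((y - x) * (A * n + D * (m * x + n) * (m * y + n))) :=
      mul_pos (mul_pos (mul_pos hγ hmpos) hApos)
        (mul_pos (by linarith : (0:ℝ) < y - x)
          (by positivity : (0:ℝ) < A * n + D * (m * x + n) * (m * y + n)))
    linarith [hfac, hp]
  -- explicit solution
  obtain ⟨Bq, hBq'⟩ : ∃ B : ℝ, γ * B = γ * A - γ * n * D - ρ * A :=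
    ⟨A - n * D - ρ * A / γ, by field_simp⟩
  have hDnA : 0 < 4 * D * n * A := by
    have := mul_pos (mul_pos hDpos hnpos) hApos
    linarith
  have harg : 0 ≤ Bq ^ 2 + 4 * D * n * A := by
    linarith [sq_nonneg Bq]
  set s : ℝ := Real.sqrt (Bq ^ 2 + 4 * D * n * A) with hsdef
  have hs2 : s ^ 2 = Bq ^ 2 + 4 * D * n * A := Real.sq_sqrt harg
  have hspos : 0 < s := Real.sqrt_pos.2 (by nlinarith [sq_nonneg Bq, hDnA])
  have hpos1 : 0 < A - Bq - D * n := by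
    have h := mul_pos hρ hApos
    nlinarith [hBq']
  have hlt : (Bq + 2 * D * n) ^ 2 < s ^ 2 := by
    rw [hs2]
    nlinarith [mul_pos (mul_pos hDpos hnpos) hpos1]
  have hsgt : Bq + 2 * D * n < s := lt_of_pow_lt_pow_left₀ 2 hspos.le hlt
  set tstar : ℝ := (s - Bq) / (2 * D) with htdef
  have htn : n < tstar := by
    rw [htdef, lt_div_iff₀ (by positivity : (0:ℝ) < 2 * D)]
    linarith
  have htpos : 0 < tstar := hnpos.trans htn
  have h2dt : 2 * D * tstar = s - Bq := by
    rw [htdef]; field_simp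
  have hquad4 : 4 * D * (D * tstar ^ 2 + Bq * tstar - n * A) = 0 := by
    linear_combination (2 * D * tstar + s + Bq) * h2dt + hs2
  have hquad : D * tstar ^ 2 + Bq * tstar = n * A := by
    rcases mul_eq_zero.mp hquad4 with h | h
    · linarith
    · linarith
  set xstar : ℝ := (tstar - n) / m with hxdef
  have hxpos : 0 < xstar := div_pos (by linarith) hmpos
  have hmx : m * xstar + n = tstar := by
    rw [hxdef]; field_simp; ring
  have hmx' : m * xstar = tstar - n := by linarith
  have hfx : f xstar = ρ := by
    rw [key xstar hxpos, hmx, hmx',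
      div_eq_iff (mul_pos hApos htpos).ne']
    linear_combination γ * hquad - tstar * hBq'
  refine ⟨xstar, ⟨hxpos, hfx⟩, ?_⟩
  rintro y ⟨hy, hfy⟩
  rcases lt_trichotomy y xstar with h | h | h
  · exact absurd (mono y xstar hy h) (by rw [hfy, hfx]; exact lt_irrefl ρ)
  · exact h
  · exact absurd (mono xstar y hxpos h) (by rw [hfy, hfx]; exact lt_irrefl ρ)
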